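/- Let g be a real semisimple Lie algebra with Iwasawa data, α a simple root, and suppose ξ = aH_α + (1-θ)ξ_α and η = (1-θ)η_α span a two-dimensional Lie triple system V ⊆ p with a ≠ 0 and ξ_α, η_α ∈ g_α, η_α ≠ 0. If additionally ad(ξ)²η is proportional to η and [ξ,η], [η,[η,ξ]] are orthogonal to g_{2α}, then [ξ_α, η_α] = 0. -/

import Mathlib

/-- The inner product `⟨X,Y⟩ = -B(X, θY)` associated with a Cartan involution `θ`. -/
noncomputable def cip (L : Type*) [LieRing L] [LieAlgebra ℝ L]
    (θ : L →ₗ⁅ℝ⁆ L) (X Y : L) : ℝ :=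
  -(killingForm ℝ L X (θ Y))

set_option linter.unusedSectionVars false

section Aux
variable {L : Type*} [LieRing L] [LieAlgebra ℝ L] [FiniteDimensional ℝ L]
variable (θ : L →ₗ⁅ℝ⁆ L)

lemma cip_add_left (X X' Y : L) : cip L θ (X + X') Y = cip L θ X Y + cip L θ X' Y := by
  simp [cip]; ring

lemma cip_sub_left (X X' Y : L) : cip L θ (X - X') Y = cip L θ X Y - cip L θ X' Y := by
  simp [cip]; ring

lemma cip_smul_left (c : ℝ) (X Y : L) : cip L θ (c • X) Y = c * cip L θ X Y := by
  simp [cip]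

lemma cip_add_right (X Y Y' : L) : cip L θ X (Y + Y') = cip L θ X Y + cip L θ X Y' := by
  simp [cip]; ring

lemma cip_sub_right (X Y Y' : L) : cip L θ X (Y - Y') = cip L θ X Y - cip L θ X Y' := by
  simp [cip]; ring

lemma cip_smul_right (c : ℝ) (X Y : L) : cip L θ X (c • Y) = c * cip L θ X Y := by
  simp [cip]

lemma cip_neg_right (X Y : L) : cip L θ X (-Y) = -(cip L θ X Y) := by
  simp [cip]

lemma cip_theta (hθ : Function.Involutive θ) (X Y : L) :
    cip L θ (θ X) (θ Y) = cip L θ Y X := by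
  unfold cip
  rw [hθ Y, LieModule.traceForm_comm]

end Aux

/-- Suppose `ξ = aH_α + (1-θ)ξ_α` and `η = (1-θ)η_α` span a two-dimensional Lie triple
system with `a ≠ 0`, `ξ_α, η_α ∈ g_α` orthogonal and `η_α ≠ 0`.  If `ad(ξ)²η` is
proportional to `η` and both `[ξ,η]` and `[η,[η,ξ]]` are orthogonal to `g_{2α}`,
then `[ξ_α, η_α] = 0`. -/
theorem bracket_xi_eta_eq_zero
    (L : Type*) [LieRing L] [LieAlgebra ℝ L] [FiniteDimensional ℝ L]
    [LieAlgebra.IsSemisimple ℝ L]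
    (θ : L →ₗ⁅ℝ⁆ L) (hθ : Function.Involutive θ)
    (hpos : ∀ X : L, X ≠ 0 → 0 < cip L θ X X)
    (a : Submodule ℝ L)
    (hap : ∀ H ∈ a, θ H = -H)
    (habelian : ∀ H ∈ a, ∀ H' ∈ a, ⁅H, H'⁆ = 0)
    (αl : L →ₗ[ℝ] ℝ) (Hα : L) (hHα : Hα ∈ a)
    (hdualα : ∀ H ∈ a, cip L θ Hα H = αl H)
    (hαsq : 0 < cip L θ Hα Hα)
    -- the root space `g_{2α}`
    (g2 : Submodule ℝ L)
    (hg2 : ∀ X : L, X ∈ g2 ↔ ∀ H ∈ a, ⁅H, X⁆ = (2 * αl H) • X)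
    (aa : ℝ) (haa : aa ≠ 0)
    (ξα ηα : L) (hηα0 : ηα ≠ 0)
    (hξroot : ∀ H ∈ a, ⁅H, ξα⁆ = αl H • ξα)
    (hηroot : ∀ H ∈ a, ⁅H, ηα⁆ = αl H • ηα)
    (horth : cip L θ ξα ηα = 0)
    -- the identity `(1-θ)[θX,Y] = 2⟨X,Y⟩H_α` specialised:
    (hdξ : ⁅θ ξα, ξα⁆ = cip L θ ξα ξα • Hα)
    (hdη : ⁅θ ηα, ηα⁆ = cip L θ ηα ηα • Hα)
    (hmix : θ ⁅θ ξα, ηα⁆ = ⁅θ ξα, ηα⁆)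
    (hbr2 : ⁅ξα, ηα⁆ ∈ g2)
    -- `ad` adjointness: `⟨[X,Y],Z⟩ = -⟨Y,[θX,Z]⟩`
    (hadj : ∀ X Y Z : L, cip L θ ⁅X, Y⁆ Z = -(cip L θ Y ⁅θ X, Z⁆))
    -- the two vectors spanning the Lie triple system
    (ξv ηv : L)
    (hξv : ξv = aa • Hα + (ξα - θ ξα))
    (hηv : ηv = ηα - θ ηα)
    -- `ad(ξ)²η` is proportional to `η` (constant curvature of the section)
    (hprop : ∃ C : ℝ, ⁅ξv, ⁅ξv, ηv⁆⁆ = C • ηv)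
    -- `[ξ,η]` and `[η,[η,ξ]]` are orthogonal to `g_{2α}`
    (hperp1 : ∀ X ∈ g2, cip L θ ⁅ξv, ηv⁆ X = 0)
    (hperp2 : ∀ X ∈ g2, cip L θ ⁅ηv, ⁅ηv, ξv⁆⁆ X = 0) :
    ⁅ξα, ηα⁆ = 0 := by
  set lam : ℝ := αl Hα with hlam
  have hlpos : 0 < lam := by
    have := hdualα Hα hHα
    rw [this] at hαsq
    exact hαsq
  have hθHα : θ Hα = -Hα := hap Hα hHα
  set B : L := ⁅ξα, ηα⁆ with hB
  set M : L := ⁅θ ξα, ηα⁆ with hM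
  set Pξ : L := ⁅ξα, B⁆ with hPξ
  set Qξ : L := ⁅θ ξα, B⁆ with hQξ
  -- basic weight facts
  have w_ξ : ⁅Hα, ξα⁆ = lam • ξα := hξroot Hα hHα
  have w_η : ⁅Hα, ηα⁆ = lam • ηα := hηroot Hα hHα
  have w_θξ : ⁅Hα, θ ξα⁆ = (-lam) • θ ξα := by
    have h := θ.map_lie Hα ξα
    rw [w_ξ, hθHα, neg_lie, map_smul] at h
    rw [← neg_neg ⁅Hα, θ ξα⁆, ← h]; module
  have w_θη : ⁅Hα, θ ηα⁆ = (-lam) • θ ηα := by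
    have h := θ.map_lie Hα ηα
    rw [w_η, hθHα, neg_lie, map_smul] at h
    rw [← neg_neg ⁅Hα, θ ηα⁆, ← h]; module
  have w_B : ⁅Hα, B⁆ = (2 * lam) • B := (hg2 B).mp hbr2 Hα hHα
  have hθB : θ B = ⁅θ ξα, θ ηα⁆ := θ.map_lie ξα ηα
  have w_θB : ⁅Hα, θ B⁆ = (-(2 * lam)) • θ B := by
    have h := θ.map_lie Hα B
    rw [w_B, hθHα, neg_lie, map_smul] at h
    rw [← neg_neg ⁅Hα, θ B⁆, ← h]; module
  have w_M : ⁅Hα, M⁆ = (0 : ℝ) • M := by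
    rw [hM, leibniz_lie, w_θξ, w_η, smul_lie, lie_smul]
    module
  have w_Pξ : ⁅Hα, Pξ⁆ = (3 * lam) • Pξ := by
    rw [hPξ, leibniz_lie, w_ξ, w_B, smul_lie, lie_smul]
    module
  have w_Qξ : ⁅Hα, Qξ⁆ = lam • Qξ := by
    rw [hQξ, leibniz_lie, w_θξ, w_B, smul_lie, lie_smul]
    module
  -- orthogonality of distinct weight vectors
  have orth : ∀ (X Y : L) (b c : ℝ), ⁅Hα, X⁆ = b • X → ⁅Hα, Y⁆ = c • Y → b ≠ c →
      cip L θ X Y = 0 := by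
    intro X Y b c hX hY hbc
    have h := hadj Hα X Y
    rw [hX, hθHα, neg_lie, hY, cip_smul_left, cip_neg_right, cip_smul_right, neg_neg] at h
    have h2 : (b - c) * cip L θ X Y = 0 := by linear_combination h
    rcases mul_eq_zero.mp h2 with h3 | h3
    · exact absurd (sub_eq_zero.mp h3) hbc
    · exact h3
  -- the bracket identities for the mixed terms
  have hξθη : ⁅ξα, θ ηα⁆ = M := by
    have h := θ.map_lie (θ ξα) ηα
    rw [hθ ξα] at h
    rw [← h, hmix]
  have hθξθη : ⁅θ ξα, θ ηα⁆ = θ B := hθB.symm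
  -- explicit form of ⁅ξv, ηv⁆
  have hN : ⁅ξv, ηv⁆ = (aa * lam) • ηα + (aa * lam) • θ ηα + B + θ B - (2 : ℝ) • M := by
    rw [hξv, hηv]
    simp only [add_lie, sub_lie, lie_sub, smul_lie]
    rw [w_η, w_θη, hξθη, hθξθη, ← hB, ← hM]
    module
  -- explicit form of ⁅ξv, B⁆
  have hξvB : ⁅ξv, B⁆ = (2 * (aa * lam)) • B + Pξ - Qξ := by
    rw [hξv]
    simp only [add_lie, sub_lie, smul_lie]
    rw [w_B, ← hPξ, ← hQξ]
    module
  -- θ fixes ξv up to sign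
  have hθξv : θ ξv = -ξv := by
    rw [hξv, map_add, map_sub, map_smul, hθHα, hθ ξα]
    module
  -- move one bracket across the inner product
  have key : cip L θ ⁅ξv, ⁅ξv, ηv⁆⁆ B = cip L θ ⁅ξv, ηv⁆ ⁅ξv, B⁆ := by
    have h := hadj ξv ⁅ξv, ηv⁆ B
    rw [hθξv, neg_lie, cip_neg_right, neg_neg] at h
    exact h
  -- the key cross term ⟨η_α, Q_ξ⟩ = -⟨B,B⟩
  have hηQ : cip L θ ηα Qξ = -(cip L θ B B) := by
    have h1 : cip L θ (θ Qξ) (θ ηα) = cip L θ ηα Qξ := cip_theta θ hθ Qξ ηα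
    have hθQ : θ Qξ = ⁅ξα, θ B⁆ := by
      rw [hQξ, θ.map_lie, hθ ξα]
    have h2 := hadj ξα (θ B) (θ ηα)
    rw [← hθQ] at h2
    rw [hθξθη] at h2
    rw [h2, cip_theta θ hθ B B] at h1
    linarith [h1]
  -- orthogonality facts
  have o_ηB : cip L θ ηα B = 0 := orth _ _ _ _ w_η w_B (by intro h; linarith)
  have o_θηB : cip L θ (θ ηα) B = 0 := orth _ _ _ _ w_θη w_B (by intro h; linarith)
  have o_θBB : cip L θ (θ B) B = 0 := orth _ _ _ _ w_θB w_B (by intro h; linarith)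
  have o_MB : cip L θ M B = 0 := orth _ _ _ _ w_M w_B (by intro h; linarith)
  have o_ηP : cip L θ ηα Pξ = 0 := orth _ _ _ _ w_η w_Pξ (by intro h; linarith)
  have o_θηP : cip L θ (θ ηα) Pξ = 0 := orth _ _ _ _ w_θη w_Pξ (by intro h; linarith)
  have o_BP : cip L θ B Pξ = 0 := orth _ _ _ _ w_B w_Pξ (by intro h; linarith)
  have o_θBP : cip L θ (θ B) Pξ = 0 := orth _ _ _ _ w_θB w_Pξ (by intro h; linarith)
  have o_MP : cip L θ M Pξ = 0 := orth _ _ _ _ w_M w_Pξ (by intro h; linarith)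
  have o_θηQ : cip L θ (θ ηα) Qξ = 0 := orth _ _ _ _ w_θη w_Qξ (by intro h; linarith)
  have o_BQ : cip L θ B Qξ = 0 := orth _ _ _ _ w_B w_Qξ (by intro h; linarith)
  have o_θBQ : cip L θ (θ B) Qξ = 0 := orth _ _ _ _ w_θB w_Qξ (by intro h; linarith)
  have o_MQ : cip L θ M Qξ = 0 := orth _ _ _ _ w_M w_Qξ (by intro h; linarith)
  -- the expansion of the pairing
  have expand : cip L θ ⁅ξv, ηv⁆ ⁅ξv, B⁆ = (3 * (aa * lam)) * cip L θ B B := by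
    rw [hN, hξvB]
    simp only [cip_add_left, cip_sub_left, cip_smul_left, cip_add_right, cip_sub_right,
      cip_smul_right]
    rw [o_ηB, o_θηB, o_θBB, o_MB, o_ηP, o_θηP, o_BP, o_θBP, o_MP, o_θηQ, o_BQ, o_θBQ, o_MQ, hηQ]
    ring
  -- the pairing vanishes by the proportionality hypothesis
  have vanish : cip L θ ⁅ξv, ⁅ξv, ηv⁆⁆ B = 0 := by
    obtain ⟨C, hC⟩ := hprop
    rw [hC, hηv, cip_smul_left, cip_sub_left, o_ηB, o_θηB]
    ring
  have hBB : cip L θ B B = 0 := by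
    have h := vanish
    rw [key, expand] at h
    have h3 : (3 * (aa * lam)) ≠ 0 := mul_ne_zero three_ne_zero (mul_ne_zero haa (ne_of_gt hlpos))
    exact (mul_eq_zero.mp h).resolve_left h3
  by_contra hne
  have := hpos B hne
  linarith
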